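/- (({e²} ∘ G₁) ∘ {e²}) ∩ (({e⁴} ∘ G₁) ∘ {e⁴}) = ∅: no word labels both a direct summand of ω(1²) ⊗ ω(g) ⊗ ω(1²) for some g ∈ G₁ and a direct summand of ω(1⁴) ⊗ ω(g') ⊗ ω(1⁴) for some g' ∈ G₁. (Lemma 3.4(3) of the paper.) -/

import Mathlib

/- Combinatorial model of the Lemeux–Tarrago fusion rules for a free wreath
product 𝔾 ≀* S_N⁺. Words over `I` (a type modeling `Irr 𝔾`) label the
irreducible corepresentations. -/

variable {I : Type*}

/-- The conjugate word `x̄ = (x.map bar).reverse`. -/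
def conjW (bar : I → I) (x : List I) : List I := (x.map bar).reverse

/-- `fusW bar fus x y` is the set of words `z` such that `ω(z)` is a direct
summand of `ω(x) ⊗ ω(y)`: there are `u, t, v` with `x = u ++ t`,
`y = t̄ ++ v` and either `z = u ++ v` (concatenation), or `u ≠ []`, `v ≠ []`
and `z = u.dropLast ++ [γ] ++ v.tail` for some `γ ∈ fus u.getLast v.head`
(fusion). -/
def fusW (bar : I → I) (fus : I → I → Set I) (x y : List I) : Set (List I) :=
  {z | ∃ u t v : List I, x = u ++ t ∧ y = conjW bar t ++ v ∧
    (z = u ++ v ∨ ∃ a b : I, u.getLast? = some a ∧ v.head? = some b ∧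
      ∃ γ ∈ fus a b, z = u.dropLast ++ [γ] ++ v.tail)}

/-- `A ∘ B` for sets of words. -/
def fusSet (bar : I → I) (fus : I → I → Set I) (A B : Set (List I)) :
    Set (List I) :=
  {z | ∃ x ∈ A, ∃ y ∈ B, z ∈ fusW bar fus x y}

/-- `E₁`: words starting with `e`, together with the empty word. -/
def E₁ (e : I) : Set (List I) := {x | x = [] ∨ x.head? = some e}

/-- `E₂`: words all of whose letters equal `e`. -/
def E₂ (e : I) : Set (List I) := {x | ∃ k : ℕ, x = List.replicate k e}

/-- `E₃ = E₁ \ E₂`. -/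
def E₃ (e : I) : Set (List I) := E₁ e \ E₂ e

/-- `S`: words containing at least one letter different from `e`. -/
def Sset (e : I) : Set (List I) := {x | x ∉ E₂ e}

/-- `G₁`: nonempty words starting with a letter different from `e`. -/
def G₁ (e : I) : Set (List I) := {x | x ≠ [] ∧ x.head? ≠ some e}

/-- `G₂`: nonempty words starting and ending with letters different from `e`. -/
def G₂ (e : I) : Set (List I) :=
  {x | x ≠ [] ∧ x.head? ≠ some e ∧ x.getLast? ≠ some e}

/-- `z` starts with exactly `m` copies of `e`. -/
def Pw (e : I) (m : ℕ) (z : List I) : Prop :=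
  ∃ w : List I, w ≠ [] ∧ w.head? ≠ some e ∧ z = List.replicate m e ++ w

lemma Pw_unique {e : I} : ∀ {m m' : ℕ} {z : List I}, Pw e m z → Pw e m' z → m = m' := by
  intro m
  induction m with
  | zero =>
    rintro m' z ⟨w, hw, hwh, rfl⟩ ⟨w', hw', hwh', hz'⟩
    cases m' with
    | zero => rfl
    | succ m'' =>
      exfalso
      apply hwh
      rw [hz', List.replicate_succ]
      simp
  | succ m ih =>
    rintro m' z ⟨w, hw, hwh, rfl⟩ hz'
    obtain ⟨w', hw', hwh', hz'⟩ := hz'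
    cases m' with
    | zero =>
      exfalso
      apply hwh'
      rw [List.replicate_zero, List.nil_append] at hz'
      rw [← hz', List.replicate_succ]
      simp
    | succ m'' =>
      rw [List.replicate_succ, List.replicate_succ, List.cons_append, List.cons_append,
        List.cons.injEq] at hz'
      exact congrArg Nat.succ (ih ⟨w, hw, hwh, rfl⟩ ⟨w', hw', hwh', hz'.2⟩)

lemma mem_replicate_decomp {bar : I → I} {e : I} (hbar : ∀ a, bar (bar a) = a)
    (hbare : bar e = e) {k : ℕ} {t v : List I}
    (h : List.replicate k e = conjW bar t ++ v) :
    t = List.replicate t.length e ∧ v = List.replicate v.length e := by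
  have hall : ∀ a ∈ conjW bar t ++ v, a = e := by
    intro a ha; exact List.eq_of_mem_replicate (h ▸ ha)
  constructor
  · rw [List.eq_replicate_iff]
    refine ⟨rfl, fun b hb => ?_⟩
    have : bar b ∈ conjW bar t ++ v := by
      apply List.mem_append_left
      simp only [conjW, List.mem_reverse, List.mem_map]
      exact ⟨b, hb, rfl⟩
    have := hall _ this
    calc b = bar (bar b) := (hbar b).symm
    _ = bar e := by rw [this]
    _ = e := hbare
  · rw [List.eq_replicate_iff]
    exact ⟨rfl, fun b hb => hall _ (List.mem_append_right _ hb)⟩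

lemma lemA {bar : I → I} {e : I} {fus : I → I → Set I}
    (hbar : ∀ a, bar (bar a) = a) (hbare : bar e = e)
    (hfus_left : ∀ β : I, fus e β = {β}) {k : ℕ} (hk : 1 ≤ k) {x : List I}
    (hx : x ∈ fusSet bar fus {List.replicate k e} (G₁ e)) :
    Pw e (k - 1) x ∨ Pw e k x := by
  obtain ⟨x₀, hx₀, y, hy, u, t, v, hxu, hyv, hcase⟩ := hx
  rw [Set.mem_singleton_iff] at hx₀
  subst hx₀
  obtain ⟨hy1, hy2⟩ := hy
  have ht : t = List.replicate t.length e := by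
    rw [List.eq_replicate_iff]
    refine ⟨rfl, fun b hb => ?_⟩
    exact List.eq_of_mem_replicate (hxu ▸ List.mem_append_right u hb)
  have htnil : t = [] := by
    cases t with
    | nil => rfl
    | cons a t' =>
      exfalso
      apply hy2
      rw [hyv]
      have : conjW bar (a :: t') = List.replicate (a :: t').length e := by
        rw [ht]
        simp [conjW, List.map_replicate, hbare, List.reverse_replicate]
      rw [this]
      simp [List.replicate_succ]
  subst htnil
  have huv : u = List.replicate k e := by simpa using hxu.symm
  have hv : v = y := by simpa [conjW] using hyv.symm
  subst huv hv
  obtain ⟨k', rfl⟩ : ∃ k', k = k' + 1 := ⟨k - 1, (Nat.succ_pred_eq_of_pos hk).symm⟩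
  rcases hcase with h | ⟨a, b, ha, hb, γ, hγ, hz⟩
  · right
    exact ⟨v, hy1, hy2, h⟩
  · left
    rw [List.replicate_succ'] at ha hz
    rw [List.getLast?_concat] at ha
    rw [List.dropLast_concat] at hz
    have hae : a = e := Option.some.inj ha.symm
    rw [hae, hfus_left, Set.mem_singleton_iff] at hγ
    rw [hγ] at hz
    refine ⟨[b] ++ v.tail, by simp, ?_, by rw [hz, List.append_assoc, Nat.add_sub_cancel]⟩
    simp only [List.cons_append, List.head?_cons]
    rw [← hb]
    exact hy2

lemma lemB {bar : I → I} {e : I} {fus : I → I → Set I}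
    (hbar : ∀ a, bar (bar a) = a) (hbare : bar e = e)
    (hfus_right : ∀ β : I, fus β e = {β}) {m k : ℕ} {x z : List I}
    (hx : Pw e m x) (hz : z ∈ fusW bar fus x (List.replicate k e)) :
    Pw e m z := by
  obtain ⟨w, hw, hwh, rfl⟩ := hx
  obtain ⟨u, t, v, hxu, hyv, hcase⟩ := hz
  obtain ⟨ht, hv⟩ := mem_replicate_decomp hbar hbare hyv
  rw [ht] at hxu
  rcases List.append_eq_append_iff.mp hxu.symm with ⟨a', ha1, ha2⟩ | ⟨c', hc1, hc2⟩
  · exfalso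
    cases w with
    | nil => exact hw rfl
    | cons b w' =>
      apply hwh
      have hb : b ∈ List.replicate t.length e := by
        rw [ha2]; exact List.mem_append_right a' List.mem_cons_self
      rw [List.head?_cons, List.eq_of_mem_replicate hb]
  · have hc'ne : c' ≠ [] := by
      rintro rfl
      cases w with
      | nil => exact hw rfl
      | cons b w' =>
        apply hwh
        rw [List.nil_append] at hc2
        have hb : b ∈ List.replicate t.length e := by
          rw [← hc2]; exact List.mem_cons_self
        rw [List.head?_cons, List.eq_of_mem_replicate hb]
    obtain ⟨b, c'', rfl⟩ : ∃ b c'', c' = b :: c'' := by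
      cases c' with
      | nil => exact absurd rfl hc'ne
      | cons b c'' => exact ⟨b, c'', rfl⟩
    have hbe : (some b : Option I) ≠ some e := by
      rw [hc2] at hwh
      simpa using hwh
    rcases hcase with h | ⟨a, β, ha, hβ, γ, hγ, h⟩
    · refine ⟨(b :: c'') ++ v, by simp, by simpa using hbe, ?_⟩
      rw [h, hc1, List.append_assoc]
    · have hvne : v ≠ [] := by
        rintro rfl
        simp at hβ
      have hβe : β = e := by
        rw [hv] at hβ
        cases hn : v.length with
        | zero => rw [List.length_eq_zero_iff] at hn; exact absurd hn hvne
        | succ n =>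
          rw [hn, List.replicate_succ, List.head?_cons] at hβ
          exact (Option.some.inj hβ).symm
      rw [hβe, hfus_right, Set.mem_singleton_iff] at hγ
      rw [hγ] at h
      have hune : u ≠ [] := by rw [hc1]; simp
      have hu : u.dropLast ++ [a] = u := by
        have hgl := List.getLast?_eq_getLast hune
        have haa : a = u.getLast hune := Option.some.inj (ha.symm.trans hgl)
        rw [haa]
        exact List.dropLast_append_getLast hune
      refine ⟨(b :: c'') ++ v.tail, by simp, by simpa using hbe, ?_⟩
      rw [h, hu, hc1, List.append_assoc]

theorem stmt7 (bar : I → I) (e : I) (fus : I → I → Set I)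
    (hbar : ∀ a : I, bar (bar a) = a) (hbare : bar e = e)
    (hfus_left : ∀ β : I, fus e β = {β}) (hfus_right : ∀ β : I, fus β e = {β}) :
    fusSet bar fus (fusSet bar fus {List.replicate 2 e} (G₁ e))
        {List.replicate 2 e} ∩
      fusSet bar fus (fusSet bar fus {List.replicate 4 e} (G₁ e))
        {List.replicate 4 e} = ∅ := by
  rw [Set.eq_empty_iff_forall_notMem]
  rintro z ⟨h1, h2⟩
  obtain ⟨x, hx, y, hy, hzw⟩ := h1
  rw [Set.mem_singleton_iff] at hy
  subst hy
  have hP1 : Pw e (2 - 1) z ∨ Pw e 2 z := by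
    rcases lemA hbar hbare hfus_left (by norm_num) hx with h | h
    · exact Or.inl (lemB hbar hbare hfus_right h hzw)
    · exact Or.inr (lemB hbar hbare hfus_right h hzw)
  obtain ⟨x', hx', y', hy', hzw'⟩ := h2
  rw [Set.mem_singleton_iff] at hy'
  subst hy'
  have hP2 : Pw e (4 - 1) z ∨ Pw e 4 z := by
    rcases lemA hbar hbare hfus_left (by norm_num) hx' with h | h
    · exact Or.inl (lemB hbar hbare hfus_right h hzw')
    · exact Or.inr (lemB hbar hbare hfus_right h hzw')
  rcases hP1 with h | h <;> rcases hP2 with h' | h' <;>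
    · have := Pw_unique h h'
      omega
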